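/- Fix n ≥ 3 and let K_n be the complete graph on the vertex set V = {1,…,n}, and let T be the finite set of all tours of V, i.e., all orderings τ = (v_1,…,v_n) of the n vertices, so |T| = n!. For a nonnegative edge-cost vector c : Sym2 V → ℝ≥0 and a tour τ = (v_1,…,v_n), define c(τ) = ∑_{i=2}^{n} dist_{c, {v_1,…,v_i}}(v_{i−1}, v_i) + dist_{c, V}(v_n, v_1), where dist_{c, S}(u, v) denotes the shortest-path distance between u and v with respect to c in the complete graph induced on the vertex set S; define the error η(τ,c) = c(τ) − min_{τ' ∈ T} c(τ'). Let D be a probability distribution on nonnegative edge-cost vectors and suppose there is η_max > 0 such that η(τ,c) ≤ η_max for every τ ∈ T and D-almost every c. Let ε, δ ∈ (0,1) and let m be an integer with m ≥ 2·ln(2·n!/δ)·η_max²/ε². Let C_1,…,C_m be independent random cost vectors each with law D, and let τ_p be any measurable random element of T that minimizes the empirical error (1/m)·∑_{i=1}^{m} η(τ, C_i) over τ ∈ T. Then with probability at least 1 − δ, E_{c∼D}[η(τ_p, c)] ≤ min_{τ ∈ T} E_{c∼D}[η(τ, c)] + ε. -/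

import Mathlib

open MeasureTheory ProbabilityTheory

/-- The cost of traversing the list of vertices `l` in order, with respect to the
edge-cost vector `c`: the sum of `c` over consecutive pairs of `l`. -/
noncomputable def chainCost {n : ℕ} (c : Sym2 (Fin n) → ℝ) : List (Fin n) → ℝ
  | [] => 0
  | [_] => 0
  | a :: b :: t => c s(a, b) + chainCost c (b :: t)

/-- The shortest-path distance between `u` and `v` with respect to the edge costs `c` in the
complete graph induced on the vertex set `S`. -/
noncomputable def distIn {n : ℕ} (c : Sym2 (Fin n) → ℝ) (S : Set (Fin n))
    (u v : Fin n) : ℝ :=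
  sInf {x : ℝ | ∃ l : List (Fin n), (∀ y ∈ l, y ∈ S) ∧ l.head? = some u ∧
    l.getLast? = some v ∧ chainCost c l = x}

/-- The cost of the tour `τ = (τ 0, …, τ (n-1))` with respect to the edge costs `c`: each
next vertex `τ i` is reached from `τ (i-1)` via a shortest path in the complete graph induced
on the already-visited vertices `{τ 0, …, τ i}`, and finally the tour returns from
`τ (n-1)` to `τ 0` via a shortest path in the whole graph. -/
noncomputable def tourCost {n : ℕ} (c : Sym2 (Fin n) → ℝ) (τ : Equiv.Perm (Fin n)) : ℝ :=
  (∑ i : Fin n, if h : (i : ℕ) + 1 < n then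
      distIn c {x | ∃ j : Fin n, (j : ℕ) ≤ (i : ℕ) + 1 ∧ τ j = x}
        (τ i) (τ ⟨(i : ℕ) + 1, h⟩)
    else 0) +
  (if h : 0 < n then
      distIn c Set.univ (τ ⟨n - 1, by omega⟩) (τ ⟨0, h⟩)
    else 0)

/-- The error of a tour `τ` with respect to an edge-cost vector `c`: the excess of its cost
over the cost of an optimal tour. -/
noncomputable def tourErr (n : ℕ) (τ : Equiv.Perm (Fin n)) (c : Sym2 (Fin n) → ℝ) : ℝ :=
  tourCost c τ - ⨅ τ' : Equiv.Perm (Fin n), tourCost c τ'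


section Aux
open Real

noncomputable def uu (p h : ℝ) : ℝ := 1 - p + p * exp h
noncomputable def gg (p h : ℝ) : ℝ := h^2/8 + p*h - log (uu p h)
noncomputable def gg' (p h : ℝ) : ℝ := h/4 + p - p * exp h / uu p h

lemma uu_pos {p : ℝ} (hp0 : 0 ≤ p) (hp1 : p ≤ 1) (h : ℝ) : 0 < uu p h := by
  unfold uu
  rcases eq_or_lt_of_le hp1 with rfl | hlt
  · simpa using exp_pos h
  · have := exp_pos h; nlinarith

lemma hasDerivAt_uu (p h : ℝ) : HasDerivAt (uu p ·) (p * exp h) h := by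
  exact ((Real.hasDerivAt_exp h).const_mul p).const_add (1 - p)

lemma hasDerivAt_gg {p : ℝ} (hp0 : 0 ≤ p) (hp1 : p ≤ 1) (h : ℝ) :
    HasDerivAt (gg p ·) (gg' p h) h := by
  have hu := hasDerivAt_uu p h
  have hlog : HasDerivAt (fun x => log (uu p x)) (p * exp h / uu p h) h :=
    hu.log (uu_pos hp0 hp1 h).ne'
  have h1 : HasDerivAt (fun x : ℝ => x^2/8 + p*x) (h/4 + p) h := by
    have := ((hasDerivAt_pow 2 h).div_const 8).fun_add ((hasDerivAt_id h).const_mul p)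
    exact this.congr_deriv (by push_cast; ring)
  simpa [gg, gg'] using h1.fun_sub hlog

lemma hasDerivAt_gg' {p : ℝ} (hp0 : 0 ≤ p) (hp1 : p ≤ 1) (h : ℝ) :
    HasDerivAt (gg' p ·) (1/4 - p * (1-p) * exp h / (uu p h)^2) h := by
  have hu := hasDerivAt_uu p h
  have hne := (uu_pos hp0 hp1 h).ne'
  have hq : HasDerivAt (fun x => p * exp x / uu p x)
      ((p * exp h * uu p h - p * exp h * (p * exp h)) / (uu p h)^2) h :=
    (((Real.hasDerivAt_exp h).const_mul p).div hu hne)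
  have h1 : HasDerivAt (fun x : ℝ => x/4 + p) (1/4) h := by
    simpa using ((hasDerivAt_id h).div_const 4).add_const p
  have h2 : p * exp h * uu p h - p * exp h * (p * exp h) = p * (1-p) * exp h := by
    show p * exp h * (1 - p + p * exp h) - _ = _; ring
  have := h1.fun_sub hq
  rw [h2] at this
  simpa [gg'] using this

lemma gg'_mono {p : ℝ} (hp0 : 0 ≤ p) (hp1 : p ≤ 1) : Monotone (gg' p ·) := by
  apply monotone_of_deriv_nonneg
  · exact fun x => (hasDerivAt_gg' hp0 hp1 x).differentiableAt
  · intro x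
    rw [(hasDerivAt_gg' hp0 hp1 x).deriv, sub_nonneg,
      div_le_iff₀ (pow_pos (uu_pos hp0 hp1 x) 2)]
    show p * (1-p) * exp x ≤ 1/4 * (uu p x)^2
    rw [show uu p x = 1 - p + p * exp x from rfl]
    nlinarith [sq_nonneg ((1-p) - p * exp x), exp_pos x]

lemma gg'_zero (p : ℝ) : gg' p 0 = 0 := by
  unfold gg' uu; simp

lemma gg_nonneg {p : ℝ} (hp0 : 0 ≤ p) (hp1 : p ≤ 1) (h : ℝ) : 0 ≤ gg p h := by
  have hg0 : gg p 0 = 0 := by unfold gg uu; simp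
  have hdiff : ∀ x, DifferentiableAt ℝ (gg p ·) x :=
    fun x => (hasDerivAt_gg hp0 hp1 x).differentiableAt
  have hcont : Continuous (gg p ·) :=
    continuous_iff_continuousAt.2 fun x => (hdiff x).continuousAt
  have hderiv : ∀ x, deriv (gg p ·) x = gg' p x := fun x => (hasDerivAt_gg hp0 hp1 x).deriv
  rcases le_or_gt 0 h with hh | hh
  · have hmono : MonotoneOn (gg p ·) (Set.Ici 0) := by
      apply monotoneOn_of_deriv_nonneg (convex_Ici 0) hcont.continuousOn
        (fun x _ => (hdiff x).differentiableWithinAt)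
      intro x hx
      rw [hderiv x, ← gg'_zero p]
      exact gg'_mono hp0 hp1 (le_of_lt (by simpa [interior_Ici] using hx))
    have := hmono (Set.self_mem_Ici) (by exact hh) hh
    simpa [hg0] using this
  · have hanti : AntitoneOn (gg p ·) (Set.Iic 0) := by
      apply antitoneOn_of_deriv_nonpos (convex_Iic 0) hcont.continuousOn
        (fun x _ => (hdiff x).differentiableWithinAt)
      intro x hx
      rw [hderiv x, ← gg'_zero p]
      exact gg'_mono hp0 hp1 (le_of_lt (by simpa [interior_Iic] using hx))
    have := hanti (by exact hh.le) (Set.self_mem_Iic) hh.le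
    simpa [hg0] using this

/-- Key inequality: for `p ∈ [0,1]`, `(1-p)e^{-ph} + p e^{(1-p)h} ≤ e^{h²/8}`. -/
lemma key_ineq {p : ℝ} (hp0 : 0 ≤ p) (hp1 : p ≤ 1) (h : ℝ) :
    (1-p) * exp (-p*h) + p * exp ((1-p)*h) ≤ exp (h^2/8) := by
  have hu := uu_pos hp0 hp1 h
  have h1 : (1-p) * exp (-p*h) + p * exp ((1-p)*h) = exp (-p*h) * uu p h := by
    unfold uu
    rw [show (1-p)*h = h + (-p*h) by ring, exp_add]
    ring
  rw [h1, ← Real.exp_log hu, ← exp_add]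
  apply exp_le_exp.2
  have := gg_nonneg hp0 hp1 h
  unfold gg at this; linarith

lemma hoeffding_mgf {Ω : Type*} [MeasurableSpace Ω] (μ : Measure Ω) [IsProbabilityMeasure μ]
    {Z : Ω → ℝ} (hZm : Measurable Z) {a b : ℝ}
    (hZ : ∀ᵐ ω ∂μ, Z ω ∈ Set.Icc a b) (hmean : ∫ ω, Z ω ∂μ = 0) (t : ℝ) :
    ∫ ω, exp (t * Z ω) ∂μ ≤ exp (t^2*(b-a)^2/8) := by
  have hZint : Integrable Z μ := by
    refine (integrable_const (max |a| |b|)).mono' hZm.aestronglyMeasurable ?_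
    filter_upwards [hZ] with ω hω
    exact abs_le_max_abs_abs hω.1 hω.2
  have ha0 : a ≤ 0 := by
    have h1 : ∫ _ω, (a : ℝ) ∂μ ≤ ∫ ω, Z ω ∂μ :=
      integral_mono_ae (integrable_const a) hZint (by filter_upwards [hZ] with ω hω using hω.1)
    simpa [hmean] using h1
  have hb0 : 0 ≤ b := by
    have h1 : ∫ ω, Z ω ∂μ ≤ ∫ _ω, (b : ℝ) ∂μ :=
      integral_mono_ae hZint (integrable_const b) (by filter_upwards [hZ] with ω hω using hω.2)
    simpa [hmean] using h1
  rcases eq_or_lt_of_le (ha0.trans hb0) with heq | hab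
  · have ha : a = 0 := le_antisymm ha0 (heq ▸ hb0)
    have hb : b = 0 := heq ▸ ha
    have hz0 : ∀ᵐ ω ∂μ, exp (t * Z ω) = 1 := by
      filter_upwards [hZ] with ω hω
      have : Z ω = 0 := le_antisymm (hb ▸ hω.2) (ha ▸ hω.1)
      simp [this]
    rw [integral_congr_ae hz0]
    simp [ha, hb]
  · set p : ℝ := -a/(b-a) with hp
    have hba : (0:ℝ) < b - a := sub_pos.2 hab
    have hp0 : 0 ≤ p := div_nonneg (neg_nonneg.2 ha0) hba.le
    have hp1 : p ≤ 1 := by rw [hp, div_le_one hba]; linarith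
    set c1 : ℝ := (exp (t*b) - exp (t*a))/(b-a) with hc1
    set c2 : ℝ := (b*exp (t*a) - a*exp (t*b))/(b-a) with hc2
    have hpt : ∀ z ∈ Set.Icc a b, exp (t * z) ≤ c1 * z + c2 := by
      intro z hz
      have hα : 0 ≤ (b - z)/(b-a) := div_nonneg (by linarith [hz.2]) hba.le
      have hβ : 0 ≤ (z - a)/(b-a) := div_nonneg (by linarith [hz.1]) hba.le
      have hαβ : (b - z)/(b-a) + (z - a)/(b-a) = 1 := by field_simp; ring
      have hconv := convexOn_exp.2 (Set.mem_univ (t*a)) (Set.mem_univ (t*b)) hα hβ hαβ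
      have hne : b - a ≠ 0 := hba.ne'
      have he1 : ((b - z)/(b-a)) • (t*a) + ((z - a)/(b-a)) • (t*b) = t * z := by
        rw [smul_eq_mul, smul_eq_mul, div_mul_eq_mul_div, div_mul_eq_mul_div,
          ← add_div, div_eq_iff hne]; ring
      have he2 : ((b - z)/(b-a)) • exp (t*a) + ((z - a)/(b-a)) • exp (t*b) = c1 * z + c2 := by
        rw [hc1, hc2, smul_eq_mul, smul_eq_mul, div_mul_eq_mul_div, div_mul_eq_mul_div,
          ← add_div, div_mul_eq_mul_div, ← add_div]
        rw [div_eq_div_iff hne hne]; ring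
      rw [he1, he2] at hconv
      exact hconv
    have hint2 : Integrable (fun ω => c1 * Z ω + c2) μ :=
      (hZint.const_mul c1).add (integrable_const c2)
    have hExpInt : Integrable (fun ω => exp (t * Z ω)) μ := by
      refine (integrable_const (max (exp (t*a)) (exp (t*b)))).mono'
        ((hZm.const_mul t).exp.aestronglyMeasurable) ?_
      filter_upwards [hZ] with ω hω
      rw [Real.norm_eq_abs, abs_of_pos (exp_pos _)]
      rcases le_total 0 t with ht | ht
      · exact le_max_of_le_right (exp_le_exp.2 (mul_le_mul_of_nonneg_left hω.2 ht))
      · exact le_max_of_le_left (exp_le_exp.2 (mul_le_mul_of_nonpos_left hω.1 ht))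
    have hle : ∫ ω, exp (t * Z ω) ∂μ ≤ ∫ ω, (c1 * Z ω + c2) ∂μ := by
      refine integral_mono_ae hExpInt hint2 ?_
      filter_upwards [hZ] with ω hω using hpt _ hω
    have hval : ∫ ω, (c1 * Z ω + c2) ∂μ = c2 := by
      rw [integral_add (hZint.const_mul c1) (integrable_const c2), integral_const_mul,
        hmean, integral_const]
      simp
    rw [hval] at hle
    refine hle.trans ?_
    set h : ℝ := t * (b - a) with hh
    have e1 : t * a = -p * h := by rw [hp, hh]; field_simp
    have e2 : t * b = (1-p) * h := by rw [hp, hh]; field_simp; ring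
    have e3 : c2 = (1-p) * exp (-p*h) + p * exp ((1-p)*h) := by
      rw [hc2, e1, e2, hp]; field_simp; ring
    have e4 : t^2*(b-a)^2/8 = h^2/8 := by rw [hh]; ring
    rw [e3, e4]
    exact key_ineq hp0 hp1 h

lemma chernoff_sum {Ω : Type*} [MeasurableSpace Ω] (P : Measure Ω) [IsProbabilityMeasure P]
    {m : ℕ} {Y : Fin m → Ω → ℝ} (hmeas : ∀ i, Measurable (Y i))
    (hind : iIndepFun Y P) {B : ℝ} (hB : 0 < B)
    (hbd : ∀ i, ∀ᵐ ω ∂P, Y i ω ∈ Set.Icc 0 B) {μ0 : ℝ}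
    (hmean : ∀ i, ∫ ω, Y i ω ∂P = μ0) {s : ℝ} (hs : 0 < s) :
    P {ω | (m:ℝ)*s ≤ ∑ i, (Y i ω - μ0)} ≤ ENNReal.ofReal (exp (-2*m*s^2/B^2)) := by
  set Z : Fin m → Ω → ℝ := fun i ω => Y i ω - μ0 with hZ
  have hZmeas : ∀ i, Measurable (Z i) := fun i => (hmeas i).sub_const μ0
  have hZind : iIndepFun Z P :=
    hind.comp (fun _ x => x - μ0) (fun _ => measurable_id.sub_const μ0)
  have hZbd : ∀ i, ∀ᵐ ω ∂P, Z i ω ∈ Set.Icc (-μ0) (B - μ0) := by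
    intro i; filter_upwards [hbd i] with ω hω
    exact ⟨by simpa [hZ] using hω.1, by simpa [hZ] using hω.2⟩
  have hYint : ∀ i, Integrable (Y i) P := by
    intro i
    refine (integrable_const (max |0| |B|)).mono' (hmeas i).aestronglyMeasurable ?_
    filter_upwards [hbd i] with ω hω
    exact abs_le_max_abs_abs hω.1 hω.2
  have hZmean : ∀ i, ∫ ω, Z i ω ∂P = 0 := by
    intro i
    rw [hZ]
    rw [integral_sub (hYint i) (integrable_const μ0), hmean i, integral_const]
    simp
  set t : ℝ := 4*s/B^2 with ht
  have ht0 : 0 ≤ t := by positivity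
  -- integrability of exp(t * sum)
  have hsumZmeas : Measurable (fun ω => ∑ i, Z i ω) := by
    exact Finset.measurable_sum _ (fun i _ => hZmeas i)
  have hint : Integrable (fun ω => exp (t * ∑ i, Z i ω)) P := by
    refine (integrable_const (exp (t * (m * (B - μ0))))).mono'
      ((hsumZmeas.const_mul t).exp.aestronglyMeasurable) ?_
    have hae : ∀ᵐ ω ∂P, ∀ i, Z i ω ∈ Set.Icc (-μ0) (B - μ0) := ae_all_iff.2 hZbd
    filter_upwards [hae] with ω hω
    rw [Real.norm_eq_abs, abs_of_pos (exp_pos _), exp_le_exp]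
    refine mul_le_mul_of_nonneg_left ?_ ht0
    calc ∑ i, Z i ω ≤ ∑ _i : Fin m, (B - μ0) := Finset.sum_le_sum (fun i _ => (hω i).2)
      _ = m * (B - μ0) := by simp [mul_comm]; ring
  have key := measure_ge_le_exp_mul_mgf (X := fun ω => ∑ i, Z i ω) (μ := P)
    ((m:ℝ)*s) ht0 hint
  have hmgf : mgf (fun ω => ∑ i, Z i ω) P t ≤ exp (m * (t^2*B^2/8)) := by
    have hfun : (fun ω => ∑ i, Z i ω) = ∑ i, Z i := by
      funext ω; simp [Finset.sum_apply]
    rw [hfun, hZind.mgf_sum hZmeas]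
    have hb : ∀ i : Fin m, mgf (Z i) P t ≤ exp (t^2*B^2/8) := by
      intro i
      have := hoeffding_mgf P (hZmeas i) (hZbd i) (hZmean i) t
      simpa [mgf, show B - μ0 - -μ0 = B by ring] using this
    calc ∏ i : Fin m, mgf (Z i) P t ≤ ∏ _i : Fin m, exp (t^2*B^2/8) :=
          Finset.prod_le_prod (fun i _ => mgf_nonneg) (fun i _ => hb i)
      _ = exp (m * (t^2*B^2/8)) := by
          rw [Finset.prod_const, ← Real.exp_nat_mul]; simp
  have hfinal : (P {ω | (m:ℝ)*s ≤ ∑ i, Z i ω}).toReal ≤ exp (-2*m*s^2/B^2) := by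
    refine key.trans ?_
    calc exp (-t * ((m:ℝ)*s)) * mgf (fun ω => ∑ i, Z i ω) P t
        ≤ exp (-t * ((m:ℝ)*s)) * exp (m * (t^2*B^2/8)) := by
          exact mul_le_mul_of_nonneg_left hmgf (exp_pos _).le
      _ = exp (-t * ((m:ℝ)*s) + m * (t^2*B^2/8)) := (exp_add _ _).symm
      _ = exp (-2*m*s^2/B^2) := by
          congr 1
          rw [ht]
          field_simp
          ring
  calc P {ω | (m:ℝ)*s ≤ ∑ i, (Y i ω - μ0)}
      = ENNReal.ofReal ((P {ω | (m:ℝ)*s ≤ ∑ i, Z i ω}).toReal) := by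
        rw [ENNReal.ofReal_toReal (measure_ne_top _ _)]
    _ ≤ ENNReal.ofReal (exp (-2*m*s^2/B^2)) := ENNReal.ofReal_le_ofReal hfinal

end Aux

lemma measurable_chainCost {n : ℕ} (l : List (Fin n)) :
    Measurable fun c : Sym2 (Fin n) → ℝ => chainCost c l := by
  induction l with
  | nil => simpa [chainCost] using measurable_const
  | cons a t ih =>
    cases t with
    | nil => simpa [chainCost] using measurable_const
    | cons b t2 =>
      simp only [chainCost]
      exact (measurable_pi_apply (s(a, b))).add ih

lemma distIn_eq {n : ℕ} (c : Sym2 (Fin n) → ℝ) (S : Set (Fin n)) (u v : Fin n) :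
    distIn c S u v = ⨅ l : {l : List (Fin n) // (∀ y ∈ l, y ∈ S) ∧ l.head? = some u ∧
      l.getLast? = some v}, chainCost c l.1 := by
  rw [iInf]
  apply congrArg sInf
  ext x
  constructor
  · rintro ⟨l, h1, h2, h3, h4⟩; exact ⟨⟨l, h1, h2, h3⟩, h4⟩
  · rintro ⟨⟨l, h1, h2, h3⟩, h4⟩; exact ⟨l, h1, h2, h3, h4⟩

lemma measurable_distIn {n : ℕ} (S : Set (Fin n)) (u v : Fin n) :
    Measurable fun c : Sym2 (Fin n) → ℝ => distIn c S u v := by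
  simp_rw [distIn_eq]
  exact Measurable.iInf fun l => measurable_chainCost l.1

lemma measurable_tourCost {n : ℕ} (τ : Equiv.Perm (Fin n)) :
    Measurable fun c : Sym2 (Fin n) → ℝ => tourCost c τ := by
  unfold tourCost
  apply Measurable.add
  · apply Finset.measurable_sum
    intro i _
    by_cases h : (i : ℕ) + 1 < n
    · simp only [dif_pos h]; exact measurable_distIn _ _ _
    · simp only [dif_neg h]; exact measurable_const
  · by_cases h : 0 < n
    · simp only [dif_pos h]; exact measurable_distIn _ _ _
    · simp only [dif_neg h]; exact measurable_const

lemma measurable_tourErr (n : ℕ) (τ : Equiv.Perm (Fin n)) :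
    Measurable (tourErr n τ) :=
  (measurable_tourCost τ).sub (Measurable.iInf fun τ' => measurable_tourCost τ')

lemma tourErr_nonneg (n : ℕ) (τ : Equiv.Perm (Fin n)) (c : Sym2 (Fin n) → ℝ) :
    0 ≤ tourErr n τ c :=
  sub_nonneg.2 (ciInf_le (Set.Finite.bddBelow (Set.finite_range _)) τ)


/-- **PAC learnability of tour predictions.** Empirical risk minimization over the finite
class of all `n!` tours of the vertices of `K_n`, using `m ≥ 2 ln(2·n!/δ) η_max² / ε²`
i.i.d. samples from `D`, returns with probability at least `1 − δ` a tour whose expected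
error is within `ε` of the best expected error. -/
theorem stmt_8 (n : ℕ) (hn : 3 ≤ n)
    (D : Measure (Sym2 (Fin n) → ℝ)) [IsProbabilityMeasure D]
    (hpos : ∀ᵐ c ∂D, ∀ e : Sym2 (Fin n), 0 ≤ c e)
    (ηmax : ℝ) (hηmax : 0 < ηmax)
    (hbound : ∀ᵐ c ∂D, ∀ τ : Equiv.Perm (Fin n), tourErr n τ c ≤ ηmax)
    (ε δ : ℝ) (hε : ε ∈ Set.Ioo (0 : ℝ) 1) (hδ : δ ∈ Set.Ioo (0 : ℝ) 1)
    (m : ℕ)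
    (hm : 2 * Real.log (2 * (n.factorial : ℝ) / δ) * ηmax ^ 2 / ε ^ 2 ≤ (m : ℝ))
    (Ω : Type*) [MeasurableSpace Ω] (P : Measure Ω) [IsProbabilityMeasure P]
    (X : Fin m → Ω → (Sym2 (Fin n) → ℝ))
    (hX_meas : ∀ i, Measurable (X i))
    (hX_indep : iIndepFun X P)
    (hX_law : ∀ i, Measure.map (X i) P = D)
    (τp : Ω → Equiv.Perm (Fin n))
    (hτp_meas : @Measurable Ω (Equiv.Perm (Fin n)) _ ⊤ τp)
    (hτp_min : ∀ ω, ∀ τ : Equiv.Perm (Fin n),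
      (1 / (m : ℝ)) * ∑ i : Fin m, tourErr n (τp ω) (X i ω) ≤
        (1 / (m : ℝ)) * ∑ i : Fin m, tourErr n τ (X i ω)) :
    ENNReal.ofReal (1 - δ) ≤
      P {ω | ∫ c, tourErr n (τp ω) c ∂D ≤
        (⨅ τ : Equiv.Perm (Fin n), ∫ c, tourErr n τ c ∂D) + ε} := by
  classical
  obtain ⟨hε0, hε1⟩ := hε
  obtain ⟨hδ0, hδ1⟩ := hδ
  have hfac0 : (0:ℝ) < (n.factorial : ℝ) := by exact_mod_cast n.factorial_pos
  have hfac1 : (1:ℝ) ≤ (n.factorial : ℝ) := by exact_mod_cast n.factorial_pos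
  have hratio : 1 < 2 * (n.factorial : ℝ) / δ := by
    rw [lt_div_iff₀ hδ0]; nlinarith
  have hlog : 0 < Real.log (2 * (n.factorial : ℝ) / δ) := Real.log_pos hratio
  have hmpos : (0:ℝ) < (m:ℝ) := lt_of_lt_of_le (by positivity) hm
  set s : ℝ := ε/2 with hsdef
  have hs : 0 < s := by positivity
  -- a.e. boundedness transferred to each sample
  have hSgm : MeasurableSet {c : Sym2 (Fin n) → ℝ | ∀ τ : Equiv.Perm (Fin n), tourErr n τ c ≤ ηmax} := by
    have : {c : Sym2 (Fin n) → ℝ | ∀ τ : Equiv.Perm (Fin n), tourErr n τ c ≤ ηmax}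
        = ⋂ τ : Equiv.Perm (Fin n), (tourErr n τ) ⁻¹' (Set.Iic ηmax) := by
      ext c; simp [Set.mem_iInter]
    rw [this]
    exact MeasurableSet.iInter fun τ => (measurable_tourErr n τ) measurableSet_Iic
  have hPXSg : ∀ i, ∀ᵐ ω ∂P, ∀ τ : Equiv.Perm (Fin n), tourErr n τ (X i ω) ≤ ηmax := by
    intro i
    have h1 : ∀ᵐ c ∂(Measure.map (X i) P),
        c ∈ {c : Sym2 (Fin n) → ℝ | ∀ τ : Equiv.Perm (Fin n), tourErr n τ c ≤ ηmax} := by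
      rw [hX_law i]; exact hbound
    exact (MeasureTheory.ae_map_iff (hX_meas i).aemeasurable hSgm).mp h1
  have hYbd : ∀ (τ : Equiv.Perm (Fin n)) (i : Fin m),
      ∀ᵐ ω ∂P, tourErr n τ (X i ω) ∈ Set.Icc 0 ηmax := by
    intro τ i; filter_upwards [hPXSg i] with ω hω
    exact ⟨tourErr_nonneg n τ _, hω τ⟩
  have hYmeas : ∀ (τ : Equiv.Perm (Fin n)) (i : Fin m),
      Measurable (fun ω => tourErr n τ (X i ω)) :=
    fun τ i => (measurable_tourErr n τ).comp (hX_meas i)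
  have hYint : ∀ (τ : Equiv.Perm (Fin n)) (i : Fin m),
      Integrable (fun ω => tourErr n τ (X i ω)) P := by
    intro τ i
    refine (integrable_const ηmax).mono' (hYmeas τ i).aestronglyMeasurable ?_
    filter_upwards [hYbd τ i] with ω hω
    rw [Real.norm_eq_abs, abs_of_nonneg hω.1]; exact hω.2
  have hYmean : ∀ (τ : Equiv.Perm (Fin n)) (i : Fin m),
      ∫ ω, tourErr n τ (X i ω) ∂P = ∫ c, tourErr n τ c ∂D := by
    intro τ i
    rw [← hX_law i,
      integral_map (hX_meas i).aemeasurable (measurable_tourErr n τ).aestronglyMeasurable]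
  -- Chernoff bounds for both deviation directions
  have hch1 : ∀ τ : Equiv.Perm (Fin n),
      P {ω | (m:ℝ)*s ≤ ∑ i, (tourErr n τ (X i ω) - ∫ c, tourErr n τ c ∂D)}
        ≤ ENNReal.ofReal (Real.exp (-2*m*s^2/ηmax^2)) := by
    intro τ
    exact chernoff_sum P (hYmeas τ)
      (hX_indep.comp (fun _ => tourErr n τ) (fun _ => measurable_tourErr n τ))
      hηmax (hYbd τ) (fun i => hYmean τ i) hs
  have hch2 : ∀ τ : Equiv.Perm (Fin n),
      P {ω | (m:ℝ)*s ≤ ∑ i, ((ηmax - tourErr n τ (X i ω)) - (ηmax - ∫ c, tourErr n τ c ∂D))}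
        ≤ ENNReal.ofReal (Real.exp (-2*m*s^2/ηmax^2)) := by
    intro τ
    refine chernoff_sum P (Y := fun i ω => ηmax - tourErr n τ (X i ω))
      (fun i => measurable_const.sub (hYmeas τ i))
      (hX_indep.comp (fun _ c => ηmax - tourErr n τ c)
        (fun _ => measurable_const.sub (measurable_tourErr n τ)))
      hηmax ?_ ?_ hs
    · intro i; filter_upwards [hYbd τ i] with ω hω
      exact ⟨by simp [hω.2], by simp [hω.1]⟩
    · intro i
      rw [integral_sub (integrable_const ηmax) (hYint τ i), integral_const, hYmean τ i]
      simp
  -- the good-event inclusion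
  have hgood : ∀ ω, ω ∉ (⋃ τ : Equiv.Perm (Fin n),
      ({ω | (m:ℝ)*s ≤ ∑ i, (tourErr n τ (X i ω) - ∫ c, tourErr n τ c ∂D)} ∪
       {ω | (m:ℝ)*s ≤ ∑ i, ((ηmax - tourErr n τ (X i ω)) - (ηmax - ∫ c, tourErr n τ c ∂D))})) →
      ∫ c, tourErr n (τp ω) c ∂D ≤
        (⨅ τ : Equiv.Perm (Fin n), ∫ c, tourErr n τ c ∂D) + ε := by
    intro ω hω
    simp only [Set.mem_iUnion, Set.mem_union, Set.mem_setOf_eq, not_exists, not_or,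
      not_le] at hω
    have key1 : ∀ τ : Equiv.Perm (Fin n),
        (∑ i, tourErr n τ (X i ω)) - m * ∫ c, tourErr n τ c ∂D < m*s := by
      intro τ
      have h1 := (hω τ).1
      rw [Finset.sum_sub_distrib, Finset.sum_const, Finset.card_univ, Fintype.card_fin,
        nsmul_eq_mul] at h1
      linarith
    have key2 : ∀ τ : Equiv.Perm (Fin n),
        (m:ℝ) * (∫ c, tourErr n τ c ∂D) - ∑ i, tourErr n τ (X i ω) < m*s := by
      intro τ
      have h2 := (hω τ).2
      have he : ∀ i : Fin m, (ηmax - tourErr n τ (X i ω)) - (ηmax - ∫ c, tourErr n τ c ∂D)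
          = (∫ c, tourErr n τ c ∂D) - tourErr n τ (X i ω) := fun i => by ring
      rw [Finset.sum_congr rfl (fun i _ => he i), Finset.sum_sub_distrib,
        Finset.sum_const, Finset.card_univ, Fintype.card_fin, nsmul_eq_mul] at h2
      linarith
    have hforall : ∀ τ : Equiv.Perm (Fin n),
        ∫ c, tourErr n (τp ω) c ∂D ≤ (∫ c, tourErr n τ c ∂D) + ε := by
      intro τ
      have hmin := hτp_min ω τ
      have hmin' : ∑ i, tourErr n (τp ω) (X i ω) ≤ ∑ i, tourErr n τ (X i ω) := by
        have hpos : (0:ℝ) < 1/(m:ℝ) := by positivity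
        exact le_of_mul_le_mul_left (by simpa [mul_comm] using hmin) hpos
      have h1 := key2 (τp ω)
      have h2 := key1 τ
      have hε2 : 2*s = ε := by rw [hsdef]; ring
      nlinarith [h1, h2, hmin', hmpos]
    have hlb : (∫ c, tourErr n (τp ω) c ∂D) - ε
        ≤ ⨅ τ : Equiv.Perm (Fin n), ∫ c, tourErr n τ c ∂D :=
      le_ciInf (fun τ => by linarith [hforall τ])
    linarith [hlb]
  -- probability of the union of bad events
  have hq : Real.exp (-2*(m:ℝ)*s^2/ηmax^2) ≤ δ / (2 * (n.factorial:ℝ)) := by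
    have hm' : 2 * Real.log (2 * (n.factorial : ℝ) / δ) * ηmax ^ 2 ≤ (m:ℝ) * ε^2 := by
      rw [div_le_iff₀ (by positivity)] at hm; linarith
    have h2 : Real.log (2 * (n.factorial : ℝ) / δ) ≤ (m:ℝ) * ε^2 / (2*ηmax^2) := by
      rw [le_div_iff₀ (by positivity)]; nlinarith
    have h3 : -2*(m:ℝ)*s^2/ηmax^2 = -((m:ℝ) * ε^2 / (2*ηmax^2)) := by
      rw [hsdef]; field_simp
    rw [h3]
    calc Real.exp (-((m:ℝ) * ε^2 / (2*ηmax^2)))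
        ≤ Real.exp (-Real.log (2 * (n.factorial : ℝ) / δ)) :=
          Real.exp_le_exp.2 (by linarith)
      _ = δ / (2 * (n.factorial:ℝ)) := by
          rw [Real.exp_neg, Real.exp_log (by positivity), inv_div]
  have hPbad : P (⋃ τ : Equiv.Perm (Fin n),
      ({ω | (m:ℝ)*s ≤ ∑ i, (tourErr n τ (X i ω) - ∫ c, tourErr n τ c ∂D)} ∪
       {ω | (m:ℝ)*s ≤ ∑ i, ((ηmax - tourErr n τ (X i ω)) - (ηmax - ∫ c, tourErr n τ c ∂D))}))
      ≤ ENNReal.ofReal δ := by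
    refine (measure_iUnion_le _).trans ?_
    have hone : ∀ τ : Equiv.Perm (Fin n),
        P ({ω | (m:ℝ)*s ≤ ∑ i, (tourErr n τ (X i ω) - ∫ c, tourErr n τ c ∂D)} ∪
           {ω | (m:ℝ)*s ≤ ∑ i, ((ηmax - tourErr n τ (X i ω)) - (ηmax - ∫ c, tourErr n τ c ∂D))})
          ≤ ENNReal.ofReal (δ / (n.factorial:ℝ)) := by
      intro τ
      refine (measure_union_le _ _).trans ?_
      refine ((add_le_add (hch1 τ) (hch2 τ)).trans ?_)
      rw [← ENNReal.ofReal_add (Real.exp_pos _).le (Real.exp_pos _).le]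
      refine ENNReal.ofReal_le_ofReal ?_
      have := hq
      have heq : δ / (2 * (n.factorial:ℝ)) + δ / (2 * (n.factorial:ℝ)) = δ / (n.factorial:ℝ) := by
        field_simp; ring
      linarith [hq]
    calc ∑' τ : Equiv.Perm (Fin n),
          P ({ω | (m:ℝ)*s ≤ ∑ i, (tourErr n τ (X i ω) - ∫ c, tourErr n τ c ∂D)} ∪
             {ω | (m:ℝ)*s ≤ ∑ i, ((ηmax - tourErr n τ (X i ω)) - (ηmax - ∫ c, tourErr n τ c ∂D))})
        ≤ ∑' _τ : Equiv.Perm (Fin n), ENNReal.ofReal (δ / (n.factorial:ℝ)) :=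
          ENNReal.tsum_le_tsum (fun τ => hone τ)
      _ = (Fintype.card (Equiv.Perm (Fin n))) * ENNReal.ofReal (δ / (n.factorial:ℝ)) := by
          rw [tsum_fintype]; simp [Finset.sum_const, nsmul_eq_mul]
      _ = ENNReal.ofReal δ := by
          rw [Fintype.card_perm, Fintype.card_fin, ← ENNReal.ofReal_natCast,
            ← ENNReal.ofReal_mul (by positivity)]
          congr 1
          field_simp
  -- conclude
  have hsub : {ω | ∫ c, tourErr n (τp ω) c ∂D ≤
        (⨅ τ : Equiv.Perm (Fin n), ∫ c, tourErr n τ c ∂D) + ε}ᶜ ⊆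
      (⋃ τ : Equiv.Perm (Fin n),
      ({ω | (m:ℝ)*s ≤ ∑ i, (tourErr n τ (X i ω) - ∫ c, tourErr n τ c ∂D)} ∪
       {ω | (m:ℝ)*s ≤ ∑ i, ((ηmax - tourErr n τ (X i ω)) - (ηmax - ∫ c, tourErr n τ c ∂D))})) := by
    intro ω hωc
    by_contra hnb
    exact hωc (hgood ω hnb)
  have h2 : P {ω | ∫ c, tourErr n (τp ω) c ∂D ≤
        (⨅ τ : Equiv.Perm (Fin n), ∫ c, tourErr n τ c ∂D) + ε}ᶜ ≤ ENNReal.ofReal δ :=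
    (measure_mono hsub).trans hPbad
  have h1 : (1:ENNReal) ≤ P {ω | ∫ c, tourErr n (τp ω) c ∂D ≤
        (⨅ τ : Equiv.Perm (Fin n), ∫ c, tourErr n τ c ∂D) + ε} +
      P {ω | ∫ c, tourErr n (τp ω) c ∂D ≤
        (⨅ τ : Equiv.Perm (Fin n), ∫ c, tourErr n τ c ∂D) + ε}ᶜ := by
    have := measure_union_le (μ := P)
      ({ω | ∫ c, tourErr n (τp ω) c ∂D ≤
        (⨅ τ : Equiv.Perm (Fin n), ∫ c, tourErr n τ c ∂D) + ε})
      ({ω | ∫ c, tourErr n (τp ω) c ∂D ≤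
        (⨅ τ : Equiv.Perm (Fin n), ∫ c, tourErr n τ c ∂D) + ε}ᶜ)
    simpa [Set.union_compl_self] using this
  have h3 : ENNReal.ofReal (1-δ) = 1 - ENNReal.ofReal δ := by
    rw [ENNReal.ofReal_sub _ hδ0.le, ENNReal.ofReal_one]
  rw [h3]
  exact le_trans (tsub_le_tsub_left h2 1) (tsub_le_iff_right.2 h1)
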